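/- (Second-order Talagrand inequality on the discrete cube) Fix 0 < s₀ < 1/128. There is a constant C > 0, independent of n and f (depending at most on s₀), such that for every n ≥ 1 and every Boolean function f : C_n → {0,1}: Var_{μⁿ}(f) ≤ C · ( Σ_{i=1}^n ‖D_i f‖_{1+e^{−2s₀}}² + Σ_{i≠j, i,j=1}^n ‖D_{ij} f‖₂² / [1 + log(‖D_{ij} f‖₂ / ‖D_{ij} f‖₁)]² ), with the convention that a summand in the second sum is 0 when D_{ij} f is identically 0. -/

import Mathlib

open scoped Classical

/-- Expectation on the discrete cube `{-1,1}ⁿ ≃ (Fin n → Bool)` under the uniform measure. -/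
noncomputable def EC {n : ℕ} (g : (Fin n → Bool) → ℝ) : ℝ :=
  (∑ x : Fin n → Bool, g x) / 2 ^ n

/-- Variance on the discrete cube under the uniform measure. -/
noncomputable def varC {n : ℕ} (g : (Fin n → Bool) → ℝ) : ℝ :=
  EC (fun x => g x ^ 2) - (EC g) ^ 2

/-- `cubeFlip i x` is `x` with its `i`-th coordinate flipped. -/
def cubeFlip {n : ℕ} (i : Fin n) (x : Fin n → Bool) : Fin n → Bool :=
  Function.update x i (!x i)

/-- Discrete derivative along the `i`-th coordinate: `Dᵢ g (x) = g(τᵢ x) − g(x)`. -/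
noncomputable def D {n : ℕ} (i : Fin n) (g : (Fin n → Bool) → ℝ) : (Fin n → Bool) → ℝ :=
  fun x => g (cubeFlip i x) - g x

/-- `L^p(μⁿ)`-norm on the discrete cube. -/
noncomputable def normC {n : ℕ} (p : ℝ) (g : (Fin n → Bool) → ℝ) : ℝ :=
  (EC fun x => |g x| ^ p) ^ (1 / p)

namespace Tal

def xi : Bool → ℝ := fun b => if b then 1 else -1

lemma xi_sq (b : Bool) : xi b ^ 2 = 1 := by cases b <;> simp [xi]

lemma xi_not (b : Bool) : xi (!b) = - xi b := by cases b <;> simp [xi]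

noncomputable def chi {n : ℕ} (S : Finset (Fin n)) (x : Fin n → Bool) : ℝ :=
  ∏ i ∈ S, xi (x i)

variable {n : ℕ}

lemma chi_empty (x : Fin n → Bool) : chi ∅ x = 1 := by simp [chi]

-- basic EC lemmas
lemma two_pow_pos : (0:ℝ) < 2 ^ n := by positivity

lemma EC_const (a : ℝ) : EC (fun _ : Fin n → Bool => a) = a := by
  simp only [EC, Finset.sum_const, Finset.card_univ, Fintype.card_fun,
    Fintype.card_bool, Fintype.card_fin, nsmul_eq_mul]
  push_cast
  field_simp

lemma EC_add (F G : (Fin n → Bool) → ℝ) :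
    EC (fun x => F x + G x) = EC F + EC G := by
  simp [EC, Finset.sum_add_distrib, add_div]

lemma EC_mul_left (a : ℝ) (F : (Fin n → Bool) → ℝ) :
    EC (fun x => a * F x) = a * EC F := by
  simp [EC, ← Finset.mul_sum, mul_div_assoc]

lemma EC_sum {ι : Type*} (s : Finset ι) (F : ι → (Fin n → Bool) → ℝ) :
    EC (fun x => ∑ i ∈ s, F i x) = ∑ i ∈ s, EC (F i) := by
  unfold EC
  rw [Finset.sum_comm, Finset.sum_div]

lemma EC_nonneg {F : (Fin n → Bool) → ℝ} (h : ∀ x, 0 ≤ F x) : 0 ≤ EC F := by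
  apply div_nonneg _ (le_of_lt two_pow_pos)
  exact Finset.sum_nonneg fun x _ => h x

lemma EC_mono {F G : (Fin n → Bool) → ℝ} (h : ∀ x, F x ≤ G x) : EC F ≤ EC G := by
  unfold EC
  exact div_le_div_of_nonneg_right (Finset.sum_le_sum fun x _ => h x) two_pow_pos.le

-- sum over cube factorizes
lemma sum_cube_prod (F : Fin n → Bool → ℝ) :
    ∑ x : Fin n → Bool, ∏ i, F i (x i) = ∏ i, (F i false + F i true) := by
  rw [show (∏ i, (F i false + F i true)) = ∏ i, ∑ b : Bool, F i b by
    refine Finset.prod_congr rfl fun i _ => ?_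
    rw [Fintype.sum_bool]; ring]
  rw [Fintype.prod_sum F]

lemma chi_ortho (S T : Finset (Fin n)) :
    EC (fun x => chi S x * chi T x) = if S = T then 1 else 0 := by
  have key : ∀ x : Fin n → Bool, chi S x * chi T x
      = ∏ i, ((if i ∈ S then xi (x i) else 1) * (if i ∈ T then xi (x i) else 1)) := by
    intro x
    rw [Finset.prod_mul_distrib]
    congr 1
    · rw [← Finset.prod_filter]
      congr 1
      simp [Finset.filter_mem_eq_inter]
    · rw [← Finset.prod_filter]
      congr 1
      simp [Finset.filter_mem_eq_inter]
  unfold EC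
  rw [Finset.sum_congr rfl fun x _ => key x]
  rw [sum_cube_prod (fun i b => (if i ∈ S then xi b else 1) * (if i ∈ T then xi b else 1))]
  by_cases h : S = T
  · subst h
    rw [if_pos rfl]
    have : ∀ i : Fin n, ((if i ∈ S then xi false else 1) * (if i ∈ S then xi false else 1)
        + (if i ∈ S then xi true else 1) * (if i ∈ S then xi true else 1)) = 2 := by
      intro i; by_cases hi : i ∈ S <;> simp [hi, xi] <;> norm_num
    rw [Finset.prod_congr rfl fun i _ => this i]
    rw [Finset.prod_const]
    rw [Finset.card_univ, Fintype.card_fin]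
    exact div_self (by positivity)
  · rw [if_neg h]
    have : ∃ i : Fin n, (i ∈ S) ≠ (i ∈ T) := by
      by_contra hc
      push_neg at hc
      exact h (Finset.ext fun i => by rw [hc i])
    obtain ⟨i, hi⟩ := this
    rw [Finset.prod_eq_zero (Finset.mem_univ i), zero_div]
    by_cases h1 : i ∈ S <;> by_cases h2 : i ∈ T <;> simp_all [xi]

lemma chi_delta (x y : Fin n → Bool) :
    ∑ S : Finset (Fin n), chi S x * chi S y = if x = y then (2:ℝ)^n else 0 := by
  have key : ∀ S : Finset (Fin n), chi S x * chi S y = ∏ i ∈ S, (xi (x i) * xi (y i)) := by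
    intro S; rw [chi, chi, Finset.prod_mul_distrib]
  rw [Finset.sum_congr rfl fun S _ => key S]
  have h2 : ∀ S : Finset (Fin n), (∏ i ∈ S, (xi (x i) * xi (y i)))
      = (∏ i ∈ S, (xi (x i) * xi (y i))) * ∏ i ∈ Sᶜ, (1:ℝ) := by
    intro S; simp
  rw [Finset.sum_congr rfl fun S _ => h2 S]
  rw [← Fintype.prod_add (fun i => xi (x i) * xi (y i)) (fun _ => (1:ℝ))]
  by_cases h : x = y
  · subst h
    rw [if_pos rfl]
    have : ∀ i : Fin n, (xi (x i) * xi (x i) + 1) = 2 := by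
      intro i; cases x i <;> simp [xi] <;> norm_num
    rw [Finset.prod_congr rfl fun i _ => this i, Finset.prod_const,
      Finset.card_univ, Fintype.card_fin]
  · rw [if_neg h]
    obtain ⟨i, hi⟩ := Function.ne_iff.mp h
    refine Finset.prod_eq_zero (Finset.mem_univ i) ?_
    cases hx : x i <;> cases hy : y i <;> simp_all [xi] <;> norm_num

noncomputable def fC {n : ℕ} (g : (Fin n → Bool) → ℝ) (S : Finset (Fin n)) : ℝ :=
  EC (fun x => g x * chi S x)

lemma inversion (g : (Fin n → Bool) → ℝ) (x : Fin n → Bool) :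
    ∑ S : Finset (Fin n), fC g S * chi S x = g x := by
  unfold fC EC
  have : ∀ S : Finset (Fin n), (∑ y : Fin n → Bool, g y * chi S y) / 2 ^ n * chi S x
      = (∑ y : Fin n → Bool, g y * (chi S y * chi S x)) / 2 ^ n := by
    intro S
    rw [div_mul_eq_mul_div, Finset.sum_mul]
    congr 1
    exact Finset.sum_congr rfl fun y _ => by ring
  rw [Finset.sum_congr rfl fun S _ => this S, ← Finset.sum_div, Finset.sum_comm]
  have : ∀ y : Fin n → Bool, (∑ S : Finset (Fin n), g y * (chi S y * chi S x))
      = if y = x then g y * 2^n else 0 := by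
    intro y
    rw [← Finset.mul_sum, chi_delta y x]
    by_cases h : y = x <;> simp [h]
  rw [Finset.sum_congr rfl fun y _ => this y, Finset.sum_ite_eq' Finset.univ x
    (fun y => g y * 2^n)]
  simp only [Finset.mem_univ, if_pos]
  field_simp

lemma fC_empty (g : (Fin n → Bool) → ℝ) : fC g ∅ = EC g := by
  unfold fC; congr 1; funext x; simp [chi_empty]

lemma parseval_mul (g h : (Fin n → Bool) → ℝ) :
    EC (fun x => g x * h x) = ∑ S : Finset (Fin n), fC g S * fC h S := by
  have : ∀ x, g x * h x = ∑ S : Finset (Fin n), fC h S * (g x * chi S x) := by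
    intro x
    conv_lhs => rw [← inversion h x]
    rw [Finset.mul_sum]
    exact Finset.sum_congr rfl fun S _ => by ring
  rw [show (fun x => g x * h x) = fun x => ∑ S : Finset (Fin n), fC h S * (g x * chi S x)
    from funext this]
  rw [EC_sum]
  exact Finset.sum_congr rfl fun S _ => by rw [EC_mul_left]; unfold fC; ring

lemma parseval (g : (Fin n → Bool) → ℝ) :
    EC (fun x => g x ^ 2) = ∑ S : Finset (Fin n), fC g S ^ 2 := by
  have := parseval_mul g g
  simp only [← sq] at this
  exact this

lemma cubeFlip_self (i : Fin n) (x : Fin n → Bool) : cubeFlip i x i = !x i := by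
  simp [cubeFlip]

lemma cubeFlip_other (i j : Fin n) (x : Fin n → Bool) (h : j ≠ i) :
    cubeFlip i x j = x j := by
  simp [cubeFlip, Function.update_of_ne h]

lemma cubeFlip_invol (i : Fin n) (x : Fin n → Bool) : cubeFlip i (cubeFlip i x) = x := by
  funext j
  by_cases h : j = i
  · subst h; rw [cubeFlip_self, cubeFlip_self, Bool.not_not]
  · rw [cubeFlip_other _ _ _ h, cubeFlip_other _ _ _ h]

def flipPerm (i : Fin n) : Equiv.Perm (Fin n → Bool) :=
  ⟨cubeFlip i, cubeFlip i, cubeFlip_invol i, cubeFlip_invol i⟩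

lemma sum_flip (i : Fin n) (F : (Fin n → Bool) → ℝ) :
    ∑ x : Fin n → Bool, F (cubeFlip i x) = ∑ x : Fin n → Bool, F x := by
  exact Fintype.sum_equiv (flipPerm i) _ _ fun x => rfl

lemma EC_flip (i : Fin n) (F : (Fin n → Bool) → ℝ) :
    EC (fun x => F (cubeFlip i x)) = EC F := by
  unfold EC; rw [sum_flip]

lemma chi_flip (S : Finset (Fin n)) (i : Fin n) (x : Fin n → Bool) :
    chi S (cubeFlip i x) = (if i ∈ S then -1 else 1) * chi S x := by
  by_cases h : i ∈ S
  · rw [if_pos h, chi, chi, ← Finset.mul_prod_erase S _ h, ← Finset.mul_prod_erase S _ h]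
    rw [cubeFlip_self, xi_not]
    have : ∀ j ∈ S.erase i, xi (cubeFlip i x j) = xi (x j) := by
      intro j hj
      rw [cubeFlip_other _ _ _ (Finset.ne_of_mem_erase hj)]
    rw [Finset.prod_congr rfl this]
    ring
  · rw [if_neg h, one_mul, chi, chi]
    refine Finset.prod_congr rfl fun j hj => ?_
    rw [cubeFlip_other _ _ _ (fun hji => h (by rwa [hji] at hj))]

lemma fC_D (i : Fin n) (g : (Fin n → Bool) → ℝ) (S : Finset (Fin n)) :
    fC (D i g) S = if i ∈ S then (-2) * fC g S else 0 := by
  unfold fC D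
  have h1 : (fun x => (g (cubeFlip i x) - g x) * chi S x)
      = fun x => g (cubeFlip i x) * chi S x + (-1) * (g x * chi S x) := by
    funext x; ring
  rw [h1, EC_add, EC_mul_left]
  have h2 : EC (fun x => g (cubeFlip i x) * chi S x)
      = (if i ∈ S then -1 else 1) * EC (fun x => g x * chi S x) := by
    have : EC (fun x => g (cubeFlip i x) * chi S x)
        = EC (fun x => (fun y => g y * ((if i ∈ S then -1 else 1) * chi S y)) (cubeFlip i x)) := by
      congr 1; funext x
      show g (cubeFlip i x) * chi S x
          = g (cubeFlip i x) * ((if i ∈ S then -1 else 1) * chi S (cubeFlip i x))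
      rw [chi_flip S i x]
      by_cases h : i ∈ S <;> simp [h] <;> ring
    rw [this, EC_flip i (fun y => g y * ((if i ∈ S then -1 else 1) * chi S y))]
    have : (fun y => g y * ((if i ∈ S then -1 else 1) * chi S y))
        = fun y => (if i ∈ S then -1 else 1) * (g y * chi S y) := by
      funext y; ring
    rw [this, EC_mul_left]
  rw [h2]
  by_cases h : i ∈ S <;> simp [h] <;> ring

noncomputable def Wc {n : ℕ} (c : Finset (Fin n) → ℝ) : (Fin n → Bool) → ℝ :=
  fun x => ∑ S : Finset (Fin n), c S * chi S x

lemma parsevalW (c c' : Finset (Fin n) → ℝ) :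
    EC (fun x => Wc c x * Wc c' x) = ∑ S : Finset (Fin n), c S * c' S := by
  have h1 : ∀ x, Wc c x * Wc c' x
      = ∑ S : Finset (Fin n), ∑ T : Finset (Fin n), (c S * c' T) * (chi S x * chi T x) := by
    intro x
    unfold Wc
    rw [Finset.sum_mul_sum]
    exact Finset.sum_congr rfl fun S _ => Finset.sum_congr rfl fun T _ => by ring
  rw [show (fun x => Wc c x * Wc c' x) = _ from funext h1, EC_sum]
  have h2 : ∀ S : Finset (Fin n),
      EC (fun x => ∑ T : Finset (Fin n), (c S * c' T) * (chi S x * chi T x)) = c S * c' S := by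
    intro S
    rw [EC_sum]
    have : ∀ T : Finset (Fin n), EC (fun x => (c S * c' T) * (chi S x * chi T x))
        = if S = T then c S * c' T else 0 := by
      intro T
      rw [EC_mul_left, chi_ortho]
      by_cases h : S = T <;> simp [h]
    rw [Finset.sum_congr rfl fun T _ => this T]
    rw [Finset.sum_ite_eq Finset.univ S (fun T => c S * c' T)]
    simp
  exact Finset.sum_congr rfl fun S _ => h2 S

lemma EC_mul_xi (i : Fin n) (F : (Fin n → Bool) → ℝ)
    (hF : ∀ x, F (cubeFlip i x) = F x) :
    EC (fun x => F x * xi (x i)) = 0 := by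
  have key : EC (fun x => F x * xi (x i)) = - EC (fun x => F x * xi (x i)) := by
    conv_lhs => rw [← EC_flip i (fun x => F x * xi (x i))]
    have : (fun x => (fun y => F y * xi (y i)) (cubeFlip i x))
        = fun x => (-1) * (F x * xi (x i)) := by
      funext x
      show F (cubeFlip i x) * xi (cubeFlip i x i) = _
      rw [hF, cubeFlip_self, xi_not]
      ring
    rw [this, EC_mul_left]
    ring
  linarith [key]

-- coefficient transforms
def cA {n : ℕ} (i : Fin n) (c : Finset (Fin n) → ℝ) : Finset (Fin n) → ℝ :=
  fun S => if i ∈ S then 0 else c S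

def cB {n : ℕ} (i : Fin n) (c : Finset (Fin n) → ℝ) : Finset (Fin n) → ℝ :=
  fun S => if i ∈ S then 0 else c (insert i S)

lemma Wc_flip_inv (i : Fin n) (c : Finset (Fin n) → ℝ) (hc : ∀ S, i ∈ S → c S = 0)
    (x : Fin n → Bool) : Wc c (cubeFlip i x) = Wc c x := by
  unfold Wc
  refine Finset.sum_congr rfl fun S _ => ?_
  by_cases h : i ∈ S
  · rw [hc S h]; ring
  · rw [chi_flip, if_neg h, one_mul]

lemma Wc_split (i : Fin n) (c : Finset (Fin n) → ℝ) (x : Fin n → Bool) :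
    Wc c x = Wc (cA i c) x + Wc (cB i c) x * xi (x i) := by
  unfold Wc cA cB
  have hA : ∑ S : Finset (Fin n), (if i ∈ S then 0 else c S) * chi S x
      = ∑ S ∈ Finset.univ.filter (fun S : Finset (Fin n) => i ∉ S), c S * chi S x := by
    rw [Finset.sum_filter]
    refine Finset.sum_congr rfl fun S _ => ?_
    by_cases h : i ∈ S <;> simp [h]
  have hB : (∑ S : Finset (Fin n), (if i ∈ S then 0 else c (insert i S)) * chi S x) * xi (x i)
      = ∑ S ∈ Finset.univ.filter (fun S : Finset (Fin n) => i ∈ S), c S * chi S x := by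
    rw [Finset.sum_mul]
    rw [show ∑ S : Finset (Fin n), ((if i ∈ S then 0 else c (insert i S)) * chi S x) * xi (x i)
        = ∑ S ∈ Finset.univ.filter (fun S : Finset (Fin n) => i ∉ S),
            c (insert i S) * chi S x * xi (x i) by
      rw [Finset.sum_filter]
      refine Finset.sum_congr rfl fun S _ => ?_
      by_cases h : i ∈ S <;> simp [h]]
    refine Finset.sum_nbij' (fun S => insert i S) (fun S => S.erase i) ?_ ?_ ?_ ?_ ?_
    · intro S hS
      simp only [Finset.mem_filter, Finset.mem_univ, true_and] at hS ⊢
      exact Finset.mem_insert_self i S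
    · intro S hS
      simp only [Finset.mem_filter, Finset.mem_univ, true_and] at hS ⊢
      exact Finset.notMem_erase i S
    · intro S hS
      simp only [Finset.mem_filter, Finset.mem_univ, true_and] at hS
      simp [Finset.erase_insert hS]
    · intro S hS
      simp only [Finset.mem_filter, Finset.mem_univ, true_and] at hS
      simp [Finset.insert_erase hS]
    · intro S hS
      simp only [Finset.mem_filter, Finset.mem_univ, true_and] at hS
      show _ = c (insert i S) * chi (insert i S) x
      simp only [chi, Finset.prod_insert hS]
      ring
  rw [hA, hB, add_comm]
  exact (Finset.sum_filter_add_sum_filter_not Finset.univ (fun S : Finset (Fin n) => i ∈ S)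
    (fun S => c S * chi S x)).symm

lemma EC_CS (u v : (Fin n → Bool) → ℝ) :
    EC (fun x => u x * v x) ^ 2 ≤ EC (fun x => u x ^ 2) * EC (fun x => v x ^ 2) := by
  unfold EC
  rw [div_pow, div_mul_div_comm]
  rw [show ((2:ℝ) ^ n) ^ 2 = (2:ℝ)^n * (2:ℝ)^n from by ring]
  apply div_le_div_of_nonneg_right _ (by positivity : (0:ℝ) ≤ 2^n * 2^n)
  exact Finset.sum_mul_sq_le_sq_mul_sq Finset.univ u v

lemma EC_sq_nonneg (u : (Fin n → Bool) → ℝ) : 0 ≤ EC (fun x => u x ^ 2) :=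
  EC_nonneg fun x => sq_nonneg _

lemma bonami (J : Finset (Fin n)) :
    ∀ (k : ℕ) (c : Finset (Fin n) → ℝ),
      (∀ S, c S ≠ 0 → S ⊆ J ∧ S.card ≤ k) →
      EC (fun x => Wc c x ^ 4) ≤ 9 ^ k * (EC fun x => Wc c x ^ 2) ^ 2 := by
  classical
  induction J using Finset.induction_on with
  | empty =>
    intro k c hc
    have hW : ∀ x, Wc c x = c ∅ := by
      intro x
      unfold Wc
      rw [Finset.sum_eq_single ∅]
      · simp [chi_empty]
      · intro S _ hS
        have : c S = 0 := by
          by_contra hne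
          exact hS (Finset.subset_empty.mp (hc S hne).1)
        simp [this]
      · simp
    rw [show (fun x => Wc c x ^ 4) = fun _ => c ∅ ^ 4 from funext fun x => by rw [hW x],
        show (fun x => Wc c x ^ 2) = fun _ => c ∅ ^ 2 from funext fun x => by rw [hW x],
        EC_const, EC_const]
    have h9 : (1:ℝ) ≤ 9 ^ k := one_le_pow₀ (by norm_num)
    nlinarith [sq_nonneg (c ∅ ^ 2)]
  | @insert i J₀ hiJ ih =>
    intro k c hc
    -- support facts
    have hsuppA : ∀ S, cA i c S ≠ 0 → S ⊆ J₀ ∧ S.card ≤ k := by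
      intro S hS
      unfold cA at hS
      by_cases h : i ∈ S
      · simp [h] at hS
      · rw [if_neg h] at hS
        obtain ⟨h1, h2⟩ := hc S hS
        refine ⟨fun j hj => ?_, h2⟩
        rcases Finset.mem_insert.mp (h1 hj) with rfl | hj'
        · exact absurd hj h
        · exact hj'
    have hWsplit : ∀ x, Wc c x = Wc (cA i c) x + Wc (cB i c) x * xi (x i) :=
      Wc_split i c
    have hsuppB : ∀ S, cB i c S ≠ 0 → S ⊆ J₀ ∧ S.card + 1 ≤ k := by
      intro S hS
      unfold cB at hS
      by_cases h : i ∈ S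
      · simp [h] at hS
      · rw [if_neg h] at hS
        obtain ⟨h1, h2⟩ := hc _ hS
        constructor
        · intro j hj
          have hji : j ≠ i := fun hji => h (hji ▸ hj)
          rcases Finset.mem_insert.mp (h1 (Finset.mem_insert_of_mem hj)) with hji' | hj'
          · exact absurd hji' hji
          · exact hj'
        · rw [Finset.card_insert_of_notMem h] at h2
          omega
    have hA_flip : ∀ x, Wc (cA i c) (cubeFlip i x) = Wc (cA i c) x :=
      Wc_flip_inv i _ (fun S hS => by unfold cA; rw [if_pos hS])
    have hB_flip : ∀ x, Wc (cB i c) (cubeFlip i x) = Wc (cB i c) x :=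
      Wc_flip_inv i _ (fun S hS => by unfold cB; rw [if_pos hS])
    set A := Wc (cA i c) with hA
    set B := Wc (cB i c) with hB
    have hptw2 : ∀ x, Wc c x ^ 2 = (A x^2 + B x^2) + (2 * A x * B x) * xi (x i) := by
      intro x
      have h := xi_sq (x i)
      rw [hWsplit x]
      linear_combination (B x ^ 2) * h
    have hptw4 : ∀ x, Wc c x ^ 4
        = (A x^4 + 6 * (A x^2 * B x^2) + B x^4) + (4*A x^3*B x + 4*A x*B x^3) * xi (x i) := by
      intro x
      have h := xi_sq (x i)
      rw [hWsplit x]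
      linear_combination (6*A x^2*B x^2 + 4*A x*B x^3*xi (x i) + B x^4*(xi (x i)^2+1)) * h
    have hECsq : EC (fun x => Wc c x ^ 2) = EC (fun x => A x ^ 2) + EC (fun x => B x ^ 2) := by
      rw [show (fun x => Wc c x ^2)
          = fun x => (A x^2 + B x^2) + (2*A x*B x)*xi (x i) from funext hptw2]
      rw [EC_add (fun x => A x^2 + B x^2) (fun x => (2*A x*B x)*xi (x i))]
      rw [EC_add (fun x => A x^2) (fun x => B x^2)]
      rw [EC_mul_xi i (fun x => 2*A x*B x) (fun x => by simp only [hA_flip, hB_flip])]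
      ring
    have hEC4 : EC (fun x => Wc c x ^ 4)
        = EC (fun x => A x ^ 4) + 6 * EC (fun x => A x^2 * B x^2) + EC (fun x => B x ^ 4) := by
      rw [show (fun x => Wc c x ^4)
          = fun x => (A x^4 + 6 * (A x^2 * B x^2) + B x^4)
            + (4*A x^3*B x + 4*A x*B x^3)*xi (x i) from funext hptw4]
      rw [EC_add (fun x => A x^4 + 6*(A x^2*B x^2) + B x^4)
        (fun x => (4*A x^3*B x + 4*A x*B x^3)*xi (x i))]
      rw [EC_add (fun x => A x^4 + 6*(A x^2*B x^2)) (fun x => B x^4)]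
      rw [EC_add (fun x => A x^4) (fun x => 6*(A x^2*B x^2))]
      rw [EC_mul_left 6 (fun x => A x^2*B x^2)]
      rw [EC_mul_xi i (fun x => 4*A x^3*B x + 4*A x*B x^3)
        (fun x => by simp only [hA_flip, hB_flip])]
      ring
    rw [hEC4, hECsq]
    have hq0 : (0:ℝ) ≤ EC (fun x => A x^2 * B x^2) :=
      EC_nonneg fun x => by positivity
    have ha0 : (0:ℝ) ≤ EC (fun x => A x^2) := EC_sq_nonneg A
    have hb0 : (0:ℝ) ≤ EC (fun x => B x^2) := EC_sq_nonneg B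
    have hCS : EC (fun x => A x^2 * B x^2) ^ 2
        ≤ EC (fun x => A x^4) * EC (fun x => B x^4) := by
      have := EC_CS (fun x => A x^2) (fun x => B x^2)
      rw [show (fun x => (A x^2)^2) = fun x => A x^4 from funext fun x => by ring,
          show (fun x => (B x^2)^2) = fun x => B x^4 from funext fun x => by ring] at this
      exact this
    cases k with
    | zero =>
      have hcB0 : ∀ S, cB i c S = 0 := by
        intro S
        by_contra hne
        have := (hsuppB S hne).2
        omega
      have hB0 : ∀ x, B x = 0 := by
        intro x
        rw [hB]
        unfold Wc
        exact Finset.sum_eq_zero fun S _ => by rw [hcB0 S]; ring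
      have e1 : EC (fun x => A x^2 * B x^2) = 0 := by
        rw [show (fun x => A x^2*B x^2) = fun _ => (0:ℝ) from funext fun x => by
          rw [hB0 x]; ring, EC_const]
      have e2 : EC (fun x => B x^4) = 0 := by
        rw [show (fun x => B x^4) = fun _ => (0:ℝ) from funext fun x => by
          rw [hB0 x]; ring, EC_const]
      have e3 : EC (fun x => B x^2) = 0 := by
        rw [show (fun x => B x^2) = fun _ => (0:ℝ) from funext fun x => by
          rw [hB0 x]; ring, EC_const]
      rw [e1, e2, e3]
      have := ih 0 (cA i c) hsuppA
      simpa using this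
    | succ k' =>
      have hIA := ih (k'+1) (cA i c) hsuppA
      have hIB := ih k' (cB i c) (fun S hS => ⟨(hsuppB S hS).1, by
        have := (hsuppB S hS).2; omega⟩)
      set a := EC (fun x => A x^2)
      set b := EC (fun x => B x^2)
      set q := EC (fun x => A x^2 * B x^2)
      set al := EC (fun x => A x^4)
      set be := EC (fun x => B x^4)
      have hal0 : (0:ℝ) ≤ al := EC_nonneg fun x => by positivity
      have hbe0 : (0:ℝ) ≤ be := EC_nonneg fun x => by positivity
      set P := (9:ℝ)^k' with hP
      have h9 : (0:ℝ) < P := by positivity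
      have h99 : (9:ℝ)^(k'+1) = 9 * P := by rw [pow_succ]; ring
      have hR0 : (0:ℝ) ≤ 3*P*a*b := by positivity
      have h1 : q^2 ≤ (3*P*a*b)^2 := by
        have hmul : al * be ≤ (9^(k'+1) * a^2) * (P * b^2) :=
          mul_le_mul hIA hIB hbe0 (by positivity)
        calc q^2 ≤ al * be := hCS
        _ ≤ (9^(k'+1) * a^2) * (P * b^2) := hmul
        _ = (3*P*a*b)^2 := by rw [h99]; ring
      have hq : q ≤ 3*P*a*b := by nlinarith [h1, hq0, hR0]
      have hexp : (9:ℝ)^(k'+1) * (a+b)^2 = 9*P*a^2 + 18*(P*a*b) + 9*(P*b^2) := by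
        rw [h99]; ring
      have hPb2 : (0:ℝ) ≤ P*b^2 := by positivity
      have hIA' : al ≤ 9*P*a^2 := by rw [← h99] at *; linarith [hIA]
      rw [hexp]
      linarith [hIA', hIB, hq, hPb2]

lemma proj_bound (k : ℕ) (g : (Fin n → Bool) → ℝ) :
    ∑ S ∈ Finset.univ.filter (fun S : Finset (Fin n) => S.card ≤ k), fC g S ^ 2
      ≤ 3^k * EC (fun x => |g x|) * Real.sqrt (EC (fun x => g x ^ 2)) := by
  classical
  set c : Finset (Fin n) → ℝ := fun S => if S.card ≤ k then fC g S else 0 with hc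
  set P := Wc c with hPdef
  set Q := ∑ S ∈ Finset.univ.filter (fun S : Finset (Fin n) => S.card ≤ k), fC g S ^ 2 with hQ
  have hQ0 : 0 ≤ Q := Finset.sum_nonneg fun S _ => sq_nonneg _
  have hgP : EC (fun x => g x * P x) = Q := by
    have h1 : ∀ x, g x * P x = ∑ S : Finset (Fin n), c S * (g x * chi S x) := by
      intro x
      rw [hPdef]
      unfold Wc
      rw [Finset.mul_sum]
      exact Finset.sum_congr rfl fun S _ => by ring
    rw [show (fun x => g x * P x) = _ from funext h1, EC_sum]
    have h2 : ∀ S : Finset (Fin n), EC (fun x => c S * (g x * chi S x)) = c S * fC g S := by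
      intro S; rw [EC_mul_left]; rfl
    rw [Finset.sum_congr rfl fun S _ => h2 S, hQ, Finset.sum_filter]
    refine Finset.sum_congr rfl fun S _ => ?_
    rw [hc]
    by_cases h : S.card ≤ k <;> simp [h] <;> ring
  have hP2 : EC (fun x => P x ^ 2) = Q := by
    have := parsevalW c c
    rw [show (fun x => P x ^2) = fun x => Wc c x * Wc c x from funext fun x => by
      rw [hPdef]; ring, this, hQ, Finset.sum_filter]
    refine Finset.sum_congr rfl fun S _ => ?_
    rw [hc]
    by_cases h : S.card ≤ k <;> simp [h] <;> ring
  have hP4 : EC (fun x => P x ^ 4) ≤ 9^k * Q^2 := by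
    have := bonami Finset.univ k c (fun S hS => ⟨Finset.subset_univ S, by
      by_contra hk
      rw [hc] at hS
      simp only [if_neg hk] at hS
      exact hS rfl⟩)
    rw [← hPdef, hP2] at this
    exact this
  -- Cauchy-Schwarz chain
  set N1 := EC (fun x => |g x|) with hN1
  set B2 := EC (fun x => g x ^ 2) with hB2
  have hN10 : 0 ≤ N1 := EC_nonneg fun x => abs_nonneg _
  have hB20 : 0 ≤ B2 := EC_sq_nonneg g
  have hW0 : 0 ≤ EC (fun x => |g x| * P x ^2) := EC_nonneg fun x => by positivity
  set W := EC (fun x => |g x| * P x ^2) with hWdef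
  have step1 : Q^2 ≤ N1 * W := by
    have hmono : EC (fun x => g x * P x) ≤ EC (fun x => Real.sqrt |g x| * (Real.sqrt |g x| * |P x|)) := by
      apply EC_mono
      intro x
      have : Real.sqrt |g x| * (Real.sqrt |g x| * |P x|) = |g x| * |P x| := by
        rw [← mul_assoc, Real.mul_self_sqrt (abs_nonneg _)]
      rw [this]
      calc g x * P x ≤ |g x * P x| := le_abs_self _
      _ = |g x| * |P x| := abs_mul _ _
    have hCS1 := EC_CS (fun x => Real.sqrt |g x|) (fun x => Real.sqrt |g x| * |P x|)
    have e1 : EC (fun x => Real.sqrt |g x| ^ 2) = N1 := by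
      rw [hN1]
      congr 1
      funext x
      rw [Real.sq_sqrt (abs_nonneg _)]
    have e2 : EC (fun x => (Real.sqrt |g x| * |P x|) ^ 2) = W := by
      rw [hWdef]
      congr 1
      funext x
      rw [mul_pow, Real.sq_sqrt (abs_nonneg _), sq_abs]
    rw [e1, e2] at hCS1
    have hle : Q ≤ EC (fun x => Real.sqrt |g x| * (Real.sqrt |g x| * |P x|)) := by
      rw [← hgP]; exact hmono
    have h0 : 0 ≤ EC (fun x => Real.sqrt |g x| * (Real.sqrt |g x| * |P x|)) :=
      le_trans hQ0 hle
    nlinarith [hCS1, hle, hQ0, h0]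
  have step2 : W^2 ≤ B2 * (9^k * Q^2) := by
    have hCS2 := EC_CS (fun x => |g x|) (fun x => P x ^ 2)
    have e1 : EC (fun x => |g x| ^ 2) = B2 := by
      rw [hB2]; congr 1; funext x; rw [sq_abs]
    have e2 : EC (fun x => (P x ^ 2) ^ 2) = EC (fun x => P x ^ 4) := by
      congr 1; funext x; ring
    rw [e1, e2] at hCS2
    calc W^2 ≤ B2 * EC (fun x => P x ^4) := hCS2
    _ ≤ B2 * (9^k * Q^2) := by
      apply mul_le_mul_of_nonneg_left hP4 hB20
  -- combine: Q^4 ≤ N1^2 * B2 * 9^k * Q^2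
  have hQ4 : Q^4 ≤ N1^2 * (B2 * (9^k * Q^2)) := by
    calc Q^4 = (Q^2)^2 := by ring
    _ ≤ (N1 * W)^2 := pow_le_pow_left₀ (sq_nonneg Q) step1 2
    _ = N1^2 * W^2 := by ring
    _ ≤ N1^2 * (B2 * (9^k * Q^2)) := by
      apply mul_le_mul_of_nonneg_left step2 (sq_nonneg _)
  by_cases hQz : Q = 0
  · rw [hQz]
    have h3 : (0:ℝ) ≤ (3:ℝ)^k := by positivity
    exact mul_nonneg (mul_nonneg h3 hN10) (Real.sqrt_nonneg _)
  · have hQpos : 0 < Q := lt_of_le_of_ne hQ0 (Ne.symm hQz)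
    have hQ2 : Q^2 ≤ 9^k * N1^2 * B2 := by
      have hKQ : Q^2 * Q^2 ≤ (9^k * N1^2 * B2) * Q^2 := by
        calc Q^2 * Q^2 = Q^4 := by ring
        _ ≤ N1^2 * (B2 * (9^k * Q^2)) := hQ4
        _ = (9^k * N1^2 * B2) * Q^2 := by ring
      exact le_of_mul_le_mul_right hKQ (pow_pos hQpos 2)
    have hRHS : (0:ℝ) ≤ (3:ℝ)^k * N1 * Real.sqrt B2 := by
      have h3 : (0:ℝ) ≤ (3:ℝ)^k := by positivity
      exact mul_nonneg (mul_nonneg h3 hN10) (Real.sqrt_nonneg _)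
    have h39 : ((3:ℝ)^k)^2 = 9^k := by
      rw [← pow_mul, mul_comm, pow_mul]; norm_num
    have hsq : ((3:ℝ)^k * N1 * Real.sqrt B2)^2 = 9^k * N1^2 * B2 := by
      rw [mul_pow, mul_pow, h39, Real.sq_sqrt hB20]
    have h1 : Q^2 ≤ ((3:ℝ)^k * N1 * Real.sqrt B2)^2 := by rw [hsq]; exact hQ2
    nlinarith [h1, hQ0, hRHS]

lemma normC_one (g : (Fin n → Bool) → ℝ) : normC 1 g = EC (fun x => |g x|) := by
  unfold normC
  rw [show (fun x => |g x| ^ (1:ℝ)) = fun x => |g x| from funext fun x => Real.rpow_one _]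
  norm_num

lemma normC_two (g : (Fin n → Bool) → ℝ) :
    normC 2 g = Real.sqrt (EC fun x => g x ^ 2) := by
  unfold normC
  rw [show (fun x => |g x| ^ (2:ℝ)) = fun x => g x ^ 2 from funext fun x => by
    rw [show (2:ℝ) = ((2:ℕ):ℝ) from by norm_num, Real.rpow_natCast, sq_abs]]
  rw [Real.sqrt_eq_rpow]

lemma normC_two_sq (g : (Fin n → Bool) → ℝ) :
    normC 2 g ^ 2 = EC (fun x => g x ^ 2) := by
  rw [normC_two, Real.sq_sqrt (EC_sq_nonneg g)]

lemma D_vals (f : (Fin n → Bool) → ℝ) (hf : ∀ x, f x = 0 ∨ f x = 1) (i : Fin n) (x) :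
    D i f x = 0 ∨ |D i f x| = 1 := by
  unfold D
  rcases hf (cubeFlip i x) with h1 | h1 <;> rcases hf x with h2 | h2 <;>
    rw [h1, h2] <;> norm_num

lemma deriv_bound (p : ℝ) (hp : 4/3 ≤ p) (f : (Fin n → Bool) → ℝ)
    (hf : ∀ x, f x = 0 ∨ f x = 1) (i : Fin n) :
    EC (fun x => |D i f x|) * Real.sqrt (EC fun x => D i f x ^ 2)
      ≤ normC p (D i f) ^ 2 := by
  have hp0 : (0:ℝ) < p := by linarith
  set a := EC (fun x => |D i f x|) with ha
  have ha0 : 0 ≤ a := EC_nonneg fun x => abs_nonneg _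
  have ha1 : a ≤ 1 := by
    have h1 : EC (fun x => |D i f x|) ≤ EC (fun _ : Fin n → Bool => (1:ℝ)) := by
      apply EC_mono
      intro x
      rcases D_vals f hf i x with h | h
      · rw [h]; norm_num
      · rw [h]
    rw [ha]
    rw [EC_const 1] at h1
    exact h1
  have hEC2 : EC (fun x => D i f x ^ 2) = a := by
    rw [ha]
    congr 1
    funext x
    rcases D_vals f hf i x with h | h
    · rw [h]; norm_num
    · rw [← sq_abs, h]; norm_num
  have hECp : EC (fun x => |D i f x| ^ p) = a := by
    rw [ha]
    congr 1
    funext x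
    rcases D_vals f hf i x with h | h
    · rw [h]; simp [Real.zero_rpow (ne_of_gt hp0)]
    · rw [h, Real.one_rpow]
  have hnorm : normC p (D i f) = a ^ (1/p) := by
    unfold normC
    rw [hECp]
  rw [hnorm, hEC2]
  rcases eq_or_lt_of_le ha0 with haz | hapos
  · rw [← haz]
    rw [Real.sqrt_zero, mul_zero]
    positivity
  · have h1 : a * Real.sqrt a = a ^ ((3:ℝ)/2) := by
      have h' : a ^ ((3:ℝ)/2) = a ^ (1:ℝ) * a ^ ((1:ℝ)/2) := by
        rw [← Real.rpow_add hapos]; norm_num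
      rw [Real.sqrt_eq_rpow, h']
      simp [Real.rpow_one]
    have h2 : (a ^ (1/p)) ^ (2:ℕ) = a ^ (2/p) := by
      rw [← Real.rpow_natCast (a ^ (1/p)) 2, ← Real.rpow_mul ha0]
      congr 1
      field_simp
      norm_num
    rw [h1, h2]
    apply Real.rpow_le_rpow_of_exponent_ge hapos ha1
    rw [div_le_div_iff₀ hp0 (by norm_num : (0:ℝ) < 2)]
    linarith

lemma exp_three : (3:ℝ) ≤ Real.exp (6/5) := by
  have h1 : (1:ℝ) + 3/20 ≤ Real.exp (3/20) := by
    have := Real.add_one_le_exp (3/20 : ℝ); linarith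
  have h2 : ((1:ℝ) + 3/20)^8 ≤ (Real.exp (3/20))^8 :=
    pow_le_pow_left₀ (by norm_num) h1 8
  have h3 : (Real.exp (3/20))^8 = Real.exp (6/5) := by
    rw [← Real.exp_nat_mul]; norm_num
  nlinarith [h2, h3]

lemma exp_le_21 : Real.exp (12/5) ≤ (21:ℝ) := by
  have h1 : Real.exp (12/5 : ℝ) ≤ Real.exp 3 := Real.exp_le_exp.mpr (by norm_num)
  have h2 : Real.exp (3:ℝ) = (Real.exp 1)^3 := by
    rw [← Real.exp_nat_mul]; norm_num
  have h3 : Real.exp 1 ≤ 2.7182818286 := le_of_lt Real.exp_one_lt_d9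
  have h4 : (Real.exp 1)^3 ≤ (2.7182818286 : ℝ)^3 :=
    pow_le_pow_left₀ (Real.exp_pos 1).le h3 3
  have h5 : (2.7182818286 : ℝ)^3 ≤ 21 := by norm_num
  linarith [h1, h2.le, h4, h5, h2.ge]

lemma one_add_sq_le (L : ℝ) (hL : 0 ≤ L) : (1+L)^2 ≤ 10 * Real.exp (7/10 * L) := by
  have h1 : (1:ℝ) + 7/20*L ≤ Real.exp (7/20*L) := by
    have := Real.add_one_le_exp (7/20*L); linarith
  have h2 : ((1:ℝ) + 7/20*L)^2 ≤ (Real.exp (7/20*L))^2 :=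
    pow_le_pow_left₀ (by positivity) h1 2
  have h3 : (Real.exp (7/20*L))^2 = Real.exp (7/10*L) := by
    rw [← Real.exp_nat_mul]  -- exp(2 * x) = exp x ^ 2
    ring_nf
  nlinarith [h2, h3]

set_option maxHeartbeats 1000000 in
lemma pair_bound (g : (Fin n → Bool) → ℝ) (hg : g ≠ 0) :
    ∑ S ∈ Finset.univ.filter (fun S : Finset (Fin n) => 3 ≤ S.card),
        fC g S ^ 2 / ((S.card : ℝ) * ((S.card : ℝ) - 1))
      ≤ 140 * (normC 2 g ^ 2 / (1 + Real.log (normC 2 g / normC 1 g)) ^ 2) := by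
  classical
  rw [normC_one, normC_two]
  obtain ⟨x₀, hx₀⟩ := Function.ne_iff.mp hg
  set N1 := EC (fun x => |g x|) with hN1def
  set B2 := EC (fun x => g x ^ 2) with hB2def
  have hN1pos : 0 < N1 := by
    rw [hN1def]
    unfold EC
    apply div_pos _ two_pow_pos
    apply Finset.sum_pos' (fun y _ => abs_nonneg _)
    refine ⟨x₀, Finset.mem_univ x₀, abs_pos.mpr ?_⟩
    simpa using hx₀
  have hB2pos : 0 < B2 := by
    rw [hB2def]
    unfold EC
    apply div_pos _ two_pow_pos
    apply Finset.sum_pos' (fun y _ => sq_nonneg _)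
    refine ⟨x₀, Finset.mem_univ x₀, ?_⟩
    have : g x₀ ≠ 0 := by simpa using hx₀
    positivity
  set N2 := Real.sqrt B2 with hN2def
  have hN2pos : 0 < N2 := Real.sqrt_pos.mpr hB2pos
  have hN2sq : N2 ^ 2 = B2 := Real.sq_sqrt hB2pos.le
  have hN1N2 : N1 ≤ N2 := by
    have hCS := EC_CS (fun x => |g x|) (fun _ => (1:ℝ))
    rw [show (fun x : Fin n → Bool => |g x| * 1) = fun x => |g x| from funext fun x => by ring,
        show (fun x : Fin n → Bool => |g x| ^2) = fun x => g x ^2 from funext fun x => by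
          rw [sq_abs],
        show (fun _ : Fin n → Bool => (1:ℝ)^2) = fun _ => (1:ℝ) from funext fun x => by norm_num,
        EC_const] at hCS
    rw [← hN1def, ← hB2def, mul_one] at hCS
    nlinarith [hCS, hN1pos, hN2pos, hN2sq]
  set L := Real.log (N2 / N1) with hLdef
  have hL0 : 0 ≤ L := Real.log_nonneg ((one_le_div hN1pos).mpr hN1N2)
  have hexpL : Real.exp (-L) * N2 = N1 := by
    rw [hLdef, ← Real.log_inv, Real.exp_log (by positivity)]
    field_simp
  set m := max 3 (Nat.ceil (L/4)) with hmdef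
  have hm3 : 3 ≤ m := le_max_left _ _
  have hmR3 : (3:ℝ) ≤ (m:ℝ) := by exact_mod_cast hm3
  have hmL : L/4 ≤ (m:ℝ) := by
    calc L/4 ≤ (Nat.ceil (L/4) : ℝ) := Nat.le_ceil _
    _ ≤ (m:ℝ) := by exact_mod_cast le_max_right _ _
  have hm1 : ((m:ℝ) - 1) ≤ L/4 + 2 := by
    have hceil : (Nat.ceil (L/4) : ℝ) < L/4 + 1 := Nat.ceil_lt_add_one (by positivity)
    have hmax : (m:ℝ) = max (3:ℝ) ((Nat.ceil (L/4) : ℝ)) := by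
      rw [hmdef]; push_cast; ring_nf
    rw [hmax]
    rcases max_cases (3:ℝ) ((Nat.ceil (L/4)):ℝ) with ⟨h, _⟩ | ⟨h, _⟩ <;> rw [h] <;> linarith
  set A := Finset.univ.filter (fun S : Finset (Fin n) => 3 ≤ S.card) with hAdef
  set tS : Finset (Fin n) → ℝ := fun S => fC g S ^ 2 / ((S.card : ℝ) * ((S.card : ℝ) - 1))
    with htS
  have hsplit : ∑ S ∈ A, tS S
      = ∑ S ∈ A.filter (fun S => S.card < m), tS S
      + ∑ S ∈ A.filter (fun S => ¬ S.card < m), tS S :=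
    (Finset.sum_filter_add_sum_filter_not A _ tS).symm
  -- low part
  have hlow : ∑ S ∈ A.filter (fun S => S.card < m), tS S
      ≤ (1/6) * (3^(m-1) * (N1 * N2)) := by
    have step1 : ∑ S ∈ A.filter (fun S => S.card < m), tS S
        ≤ ∑ S ∈ A.filter (fun S => S.card < m), fC g S ^2 / 6 := by
      apply Finset.sum_le_sum
      intro S hS
      simp only [hAdef, Finset.mem_filter, Finset.mem_univ, true_and] at hS
      obtain ⟨h3c, _⟩ := hS
      have hc : (3:ℝ) ≤ (S.card : ℝ) := by exact_mod_cast h3c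
      rw [htS]
      apply div_le_div_of_nonneg_left (sq_nonneg _) (by norm_num)
      nlinarith [hc]
    have step2 : ∑ S ∈ A.filter (fun S => S.card < m), fC g S ^2
        ≤ ∑ S ∈ Finset.univ.filter (fun S : Finset (Fin n) => S.card ≤ m - 1), fC g S ^2 := by
      apply Finset.sum_le_sum_of_subset_of_nonneg
      · intro S hS
        simp only [hAdef, Finset.mem_filter, Finset.mem_univ, true_and] at hS ⊢
        omega
      · intro S _ _
        exact sq_nonneg _
    have step3 := proj_bound (m-1) g
    rw [← hN1def, ← hB2def, ← hN2def] at step3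
    calc ∑ S ∈ A.filter (fun S => S.card < m), tS S
        ≤ ∑ S ∈ A.filter (fun S => S.card < m), fC g S ^2 / 6 := step1
      _ = (∑ S ∈ A.filter (fun S => S.card < m), fC g S ^2) / 6 := by
          rw [Finset.sum_div]
      _ ≤ (∑ S ∈ Finset.univ.filter (fun S : Finset (Fin n) => S.card ≤ m - 1),
            fC g S ^2) / 6 := div_le_div_of_nonneg_right step2 (by norm_num)
      _ ≤ (3^(m-1) * N1 * N2) / 6 := div_le_div_of_nonneg_right step3 (by norm_num)
      _ = (1/6) * (3^(m-1) * (N1 * N2)) := by ring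
  -- high part
  have hmm1 : (0:ℝ) < (m:ℝ) * ((m:ℝ)-1) := by nlinarith [hmR3]
  have hhigh : ∑ S ∈ A.filter (fun S => ¬ S.card < m), tS S
      ≤ B2 / ((m:ℝ) * ((m:ℝ)-1)) := by
    have step1 : ∑ S ∈ A.filter (fun S => ¬ S.card < m), tS S
        ≤ ∑ S ∈ A.filter (fun S => ¬ S.card < m), fC g S ^2 / ((m:ℝ)*((m:ℝ)-1)) := by
      apply Finset.sum_le_sum
      intro S hS
      simp only [hAdef, Finset.mem_filter, Finset.mem_univ, true_and, not_lt] at hS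
      obtain ⟨h3c, hmc⟩ := hS
      have hc : (m:ℝ) ≤ (S.card:ℝ) := by exact_mod_cast hmc
      rw [htS]
      apply div_le_div_of_nonneg_left (sq_nonneg _) hmm1
      nlinarith [hc, hmR3]
    have step2 : ∑ S ∈ A.filter (fun S => ¬ S.card < m), fC g S ^2
        ≤ ∑ S : Finset (Fin n), fC g S ^2 :=
      Finset.sum_le_sum_of_subset_of_nonneg (Finset.subset_univ _)
        (fun S _ _ => sq_nonneg _)
    have step3 : (∑ S : Finset (Fin n), fC g S ^2) = B2 := by
      rw [hB2def, parseval g]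
    calc ∑ S ∈ A.filter (fun S => ¬ S.card < m), tS S
        ≤ ∑ S ∈ A.filter (fun S => ¬ S.card < m), fC g S ^2 / ((m:ℝ)*((m:ℝ)-1)) := step1
      _ = (∑ S ∈ A.filter (fun S => ¬ S.card < m), fC g S ^2) / ((m:ℝ)*((m:ℝ)-1)) := by
          rw [Finset.sum_div]
      _ ≤ (∑ S : Finset (Fin n), fC g S ^2) / ((m:ℝ)*((m:ℝ)-1)) :=
          div_le_div_of_nonneg_right step2 hmm1.le
      _ = B2 / ((m:ℝ)*((m:ℝ)-1)) := by rw [step3]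
  -- numeric combination
  set Z := (1 + L)^2 with hZdef
  have hZpos : (0:ℝ) < Z := by rw [hZdef]; nlinarith [hL0]
  have hE : (3:ℝ)^(m-1) ≤ Real.exp (3/10 * L + 12/5) := by
    have hc : ((m-1 : ℕ):ℝ) = (m:ℝ) - 1 := by
      have h1m : 1 ≤ m := by omega
      push_cast [Nat.cast_sub h1m]
      ring
    have h1 : (3:ℝ)^(m-1) ≤ (Real.exp (6/5))^(m-1) :=
      pow_le_pow_left₀ (by norm_num) exp_three _
    have h2 : (Real.exp (6/5))^(m-1) = Real.exp (((m-1:ℕ):ℝ) * (6/5)) :=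
      (Real.exp_nat_mul _ _).symm
    have h3 : ((m-1:ℕ):ℝ) * (6/5) ≤ 3/10 * L + 12/5 := by
      rw [hc]; nlinarith [hm1]
    calc (3:ℝ)^(m-1) ≤ (Real.exp (6/5))^(m-1) := h1
      _ = Real.exp (((m-1:ℕ):ℝ) * (6/5)) := h2
      _ ≤ Real.exp (3/10 * L + 12/5) := Real.exp_le_exp.mpr h3
  have hN1N2' : N1 * N2 = Real.exp (-L) * B2 := by
    rw [← hexpL, ← hN2sq]; ring
  have hlowZ : (1/6) * (3^(m-1) * (N1 * N2)) * Z ≤ 35 * B2 := by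
    have hEe : (3:ℝ)^(m-1) * Real.exp (-L) ≤ Real.exp (12/5) * Real.exp (-(7/10 * L)) := by
      have h := mul_le_mul_of_nonneg_right hE (Real.exp_pos (-L)).le
      rw [← Real.exp_add, show (3/10 * L + 12/5 + -L) = 12/5 + -(7/10*L) from by ring,
        Real.exp_add] at h
      exact h
    have hZe : Z * Real.exp (-(7/10 * L)) ≤ 10 := by
      have h10 := one_add_sq_le L hL0
      have h := mul_le_mul_of_nonneg_right h10 (Real.exp_pos (-(7/10*L))).le
      rw [mul_assoc, ← Real.exp_add, show (7/10*L + -(7/10*L)) = 0 from by ring,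
        Real.exp_zero, mul_one] at h
      rw [hZdef]
      exact h
    have he21 : Real.exp (12/5 : ℝ) ≤ 21 := exp_le_21
    have hEpos : (0:ℝ) ≤ (3:ℝ)^(m-1) := by positivity
    have heL : (0:ℝ) < Real.exp (-(7/10*L)) := Real.exp_pos _
    rw [hN1N2']
    have key1 : (3:ℝ)^(m-1) * Real.exp (-L) * Z ≤ 21 * 10 := by
      calc (3:ℝ)^(m-1) * Real.exp (-L) * Z
          ≤ (Real.exp (12/5) * Real.exp (-(7/10*L))) * Z :=
            mul_le_mul_of_nonneg_right hEe hZpos.le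
        _ = Real.exp (12/5) * (Z * Real.exp (-(7/10*L))) := by ring
        _ ≤ 21 * 10 := by
            apply mul_le_mul he21 hZe _ (by norm_num)
            positivity
    have hmul := mul_le_mul_of_nonneg_right key1 hB2pos.le
    calc (1/6) * ((3:ℝ)^(m-1) * (Real.exp (-L) * B2)) * Z
        = (1/6) * ((3:ℝ)^(m-1) * Real.exp (-L) * Z * B2) := by ring
      _ ≤ (1/6) * (21 * 10 * B2) := by linarith [hmul]
      _ = 35 * B2 := by ring
  have hZ96 : Z ≤ 96 * ((m:ℝ) * ((m:ℝ)-1)) := by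
    rw [hZdef]
    nlinarith [hmR3, hmL, hL0]
  have hhighZ : B2 / ((m:ℝ) * ((m:ℝ)-1)) * Z ≤ 96 * B2 := by
    rw [div_mul_eq_mul_div, div_le_iff₀ hmm1]
    calc B2 * Z ≤ B2 * (96 * ((m:ℝ)*((m:ℝ)-1))) :=
      mul_le_mul_of_nonneg_left hZ96 hB2pos.le
    _ = 96 * B2 * ((m:ℝ)*((m:ℝ)-1)) := by ring
  -- conclude
  have htot : (∑ S ∈ A, tS S) * Z ≤ 131 * B2 := by
    rw [hsplit, add_mul]
    have h1 := mul_le_mul_of_nonneg_right hlow hZpos.le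
    have h2 := mul_le_mul_of_nonneg_right hhigh hZpos.le
    linarith [h1, h2, hlowZ, hhighZ]
  rw [hN2sq]
  calc (∑ S ∈ A, tS S) ≤ 131 * B2 / Z := (le_div_iff₀ hZpos).mpr htot
    _ ≤ 140 * (B2 / Z) := by
        rw [mul_div_assoc]
        exact mul_le_mul_of_nonneg_right (by norm_num)
          (div_nonneg hB2pos.le hZpos.le)

lemma varC_eq (f : (Fin n → Bool) → ℝ) :
    varC f = ∑ S ∈ Finset.univ.filter (fun S : Finset (Fin n) => S ≠ ∅), fC f S ^ 2 := by
  unfold varC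
  rw [parseval f, show EC f = fC f ∅ from (fC_empty f).symm]
  rw [← Finset.sum_filter_add_sum_filter_not Finset.univ
    (fun S : Finset (Fin n) => S = ∅) (fun S => fC f S ^2)]
  have h1 : Finset.univ.filter (fun S : Finset (Fin n) => S = ∅) = {∅} := by
    ext S; simp
  rw [h1, Finset.sum_singleton]
  ring

lemma first_bound (p : ℝ) (hp : 4/3 ≤ p) (f : (Fin n → Bool) → ℝ)
    (hf : ∀ x, f x = 0 ∨ f x = 1) (i : Fin n) :
    ∑ S ∈ Finset.univ.filter (fun S : Finset (Fin n) => S.card ≤ 2), fC (D i f) S ^2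
      ≤ 9 * normC p (D i f) ^ 2 := by
  have h1 := proj_bound 2 (D i f)
  have h2 := deriv_bound p hp f hf i
  have h9 : (3:ℝ)^2 = 9 := by norm_num
  calc ∑ S ∈ Finset.univ.filter (fun S : Finset (Fin n) => S.card ≤ 2), fC (D i f) S ^2
      ≤ 3^2 * EC (fun x => |D i f x|) * Real.sqrt (EC fun x => D i f x ^2) := h1
    _ = 9 * (EC (fun x => |D i f x|) * Real.sqrt (EC fun x => D i f x ^2)) := by
        rw [h9]; ring
    _ ≤ 9 * normC p (D i f) ^ 2 := by
        apply mul_le_mul_of_nonneg_left h2 (by norm_num)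

lemma fC_zero (S : Finset (Fin n)) : fC (0 : (Fin n → Bool) → ℝ) S = 0 := by
  unfold fC
  rw [show (fun x => (0 : (Fin n → Bool) → ℝ) x * chi S x) = fun _ => (0:ℝ) from
    funext fun x => by simp]
  exact EC_const 0

lemma fC_DD (i j : Fin n) (f : (Fin n → Bool) → ℝ) (S : Finset (Fin n)) :
    fC (D i (D j f)) S = if i ∈ S ∧ j ∈ S then 4 * fC f S else 0 := by
  rw [fC_D, fC_D]
  by_cases hi : i ∈ S <;> by_cases hj : j ∈ S <;> simp [hi, hj] <;> ring

lemma pair_count (S : Finset (Fin n)) (hS : 1 ≤ S.card) (w : ℝ) :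
    ∑ i : Fin n, ∑ j : Fin n, (if i ≠ j ∧ i ∈ S ∧ j ∈ S then w else 0)
      = (S.card : ℝ) * ((S.card : ℝ) - 1) * w := by
  have hinner : ∀ i : Fin n, (∑ j : Fin n, if i ≠ j ∧ i ∈ S ∧ j ∈ S then w else 0)
      = if i ∈ S then ((S.card : ℝ) - 1) * w else 0 := by
    intro i
    by_cases hi : i ∈ S
    · rw [if_pos hi]
      rw [show (fun j => if i ≠ j ∧ i ∈ S ∧ j ∈ S then w else 0)
          = fun j => if j ∈ S.erase i then w else 0 from funext fun j => by
        by_cases h1 : j ∈ S.erase i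
        · rw [if_pos h1, if_pos]
          obtain ⟨h2, h3⟩ := Finset.mem_erase.mp h1
          exact ⟨fun he => h2 he.symm, hi, h3⟩
        · rw [if_neg h1, if_neg]
          rintro ⟨hne, _, hjS⟩
          exact h1 (Finset.mem_erase.mpr ⟨fun he => hne he.symm, hjS⟩)]
      rw [Finset.sum_ite_mem, Finset.univ_inter, Finset.sum_const,
        Finset.card_erase_of_mem hi, nsmul_eq_mul]
      congr 1
      rw [Nat.cast_sub hS]
      norm_num
    · rw [if_neg hi]
      apply Finset.sum_eq_zero
      intro j _
      rw [if_neg]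
      rintro ⟨_, h2, _⟩
      exact hi h2
  rw [Finset.sum_congr rfl fun i _ => hinner i]
  rw [Finset.sum_ite_mem, Finset.univ_inter, Finset.sum_const, nsmul_eq_mul]
  ring

end Tal

open Tal

set_option maxHeartbeats 2000000

/-- Second-order Talagrand inequality on the discrete cube: for fixed `0 < s₀ < 1/128`
there is a constant `C > 0` (depending at most on `s₀`) such that for every Boolean
function `f` the variance is controlled by first-order `L^{1+e^{-2s₀}}` norms and
second-order logarithmically-weighted `L²` norms of the discrete derivatives. -/
theorem talagrand_order_two (s₀ : ℝ) (hs₀ : 0 < s₀) (hs₀' : s₀ < 1 / 128) :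
    ∃ C : ℝ, 0 < C ∧ ∀ n : ℕ, 1 ≤ n → ∀ f : (Fin n → Bool) → ℝ,
      (∀ x, f x = 0 ∨ f x = 1) →
      varC f ≤ C * ((∑ i : Fin n, (normC (1 + Real.exp (-2 * s₀)) (D i f)) ^ 2)
        + ∑ i : Fin n, ∑ j : Fin n,
            if i ≠ j then
              (if D i (D j f) = 0 then 0 else
                (normC 2 (D i (D j f))) ^ 2 /
                  (1 + Real.log (normC 2 (D i (D j f)) / normC 1 (D i (D j f)))) ^ 2)
            else 0) := by
  classical
  refine ⟨100, by norm_num, ?_⟩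
  intro n hn f hf
  set p := 1 + Real.exp (-2 * s₀) with hpdef
  have hp43 : 4/3 ≤ p := by
    have h := Real.add_one_le_exp (-2 * s₀)
    rw [hpdef]
    nlinarith [hs₀'.le, hs₀.le]
  set F1 := Finset.univ.filter (fun S : Finset (Fin n) => S ≠ ∅ ∧ S.card ≤ 2) with hF1
  set F2 := Finset.univ.filter (fun S : Finset (Fin n) => 3 ≤ S.card) with hF2
  -- variance splitting
  have hsets1 : (Finset.univ.filter (fun S : Finset (Fin n) => S ≠ ∅)).filter
      (fun S => S.card ≤ 2) = F1 := by
    rw [Finset.filter_filter, hF1]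
  have hsets2 : (Finset.univ.filter (fun S : Finset (Fin n) => S ≠ ∅)).filter
      (fun S => ¬ S.card ≤ 2) = F2 := by
    rw [Finset.filter_filter, hF2]
    ext S
    simp only [Finset.mem_filter, Finset.mem_univ, true_and]
    constructor
    · rintro ⟨h1, h2⟩
      omega
    · intro h3
      refine ⟨?_, by omega⟩
      intro he
      rw [he] at h3
      simp at h3
  have hvar : varC f = (∑ S ∈ F1, fC f S ^ 2) + ∑ S ∈ F2, fC f S ^ 2 := by
    rw [varC_eq f]
    rw [← Finset.sum_filter_add_sum_filter_not
      (Finset.univ.filter (fun S : Finset (Fin n) => S ≠ ∅))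
      (fun S => S.card ≤ 2) (fun S => fC f S ^ 2)]
    rw [hsets1, hsets2]
  -- part 1
  have hpart1 : (∑ S ∈ F1, fC f S ^ 2) ≤ (9/4) * ∑ i : Fin n, normC p (D i f) ^ 2 := by
    have hstep1 : (∑ S ∈ F1, fC f S ^ 2)
        ≤ ∑ S ∈ F1, ∑ i : Fin n, (if i ∈ S then fC f S ^ 2 else 0) := by
      apply Finset.sum_le_sum
      intro S hS
      rw [hF1, Finset.mem_filter] at hS
      obtain ⟨_, hne, _⟩ := hS
      have hcard : 1 ≤ S.card := Finset.card_pos.mpr (Finset.nonempty_iff_ne_empty.mpr hne)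
      rw [Finset.sum_ite_mem, Finset.univ_inter, Finset.sum_const, nsmul_eq_mul]
      have hc : (1:ℝ) ≤ (S.card : ℝ) := by exact_mod_cast hcard
      nlinarith [sq_nonneg (fC f S), hc]
    have hstep2 : (∑ S ∈ F1, ∑ i : Fin n, (if i ∈ S then fC f S ^ 2 else 0))
        = ∑ i : Fin n, ∑ S ∈ F1, (if i ∈ S then fC f S ^ 2 else 0) :=
      Finset.sum_comm
    have hstep3 : ∀ i : Fin n, (∑ S ∈ F1, (if i ∈ S then fC f S ^ 2 else 0))
        ≤ ∑ S ∈ Finset.univ.filter (fun S : Finset (Fin n) => S.card ≤ 2),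
            (if i ∈ S then fC f S ^ 2 else 0) := by
      intro i
      apply Finset.sum_le_sum_of_subset_of_nonneg
      · rw [hF1]
        apply Finset.monotone_filter_right
        rintro S _ ⟨_, h2⟩
        exact h2
      · intro S _ _
        by_cases h : i ∈ S <;> simp [h, sq_nonneg]
    have hstep4 : ∀ i : Fin n,
        (∑ S ∈ Finset.univ.filter (fun S : Finset (Fin n) => S.card ≤ 2),
          (if i ∈ S then fC f S ^ 2 else 0))
        = (1/4) * ∑ S ∈ Finset.univ.filter (fun S : Finset (Fin n) => S.card ≤ 2),
            fC (D i f) S ^ 2 := by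
      intro i
      rw [Finset.mul_sum]
      apply Finset.sum_congr rfl
      intro S _
      rw [fC_D]
      by_cases h : i ∈ S <;> simp [h] <;> ring
    calc (∑ S ∈ F1, fC f S ^ 2)
        ≤ ∑ S ∈ F1, ∑ i : Fin n, (if i ∈ S then fC f S ^ 2 else 0) := hstep1
      _ = ∑ i : Fin n, ∑ S ∈ F1, (if i ∈ S then fC f S ^ 2 else 0) := hstep2
      _ ≤ ∑ i : Fin n, ∑ S ∈ Finset.univ.filter (fun S : Finset (Fin n) => S.card ≤ 2),
            (if i ∈ S then fC f S ^ 2 else 0) := Finset.sum_le_sum fun i _ => hstep3 i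
      _ = ∑ i : Fin n, (1/4) * ∑ S ∈ Finset.univ.filter
            (fun S : Finset (Fin n) => S.card ≤ 2), fC (D i f) S ^ 2 :=
          Finset.sum_congr rfl fun i _ => hstep4 i
      _ ≤ ∑ i : Fin n, (1/4) * (9 * normC p (D i f) ^ 2) := by
          apply Finset.sum_le_sum
          intro i _
          have := first_bound p hp43 f hf i
          linarith [this]
      _ = (9/4) * ∑ i : Fin n, normC p (D i f) ^ 2 := by
          rw [Finset.mul_sum]
          exact Finset.sum_congr rfl fun i _ => by ring
  -- part 2
  have hpair : ∀ i j : Fin n,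
      (∑ S ∈ F2, (if i ≠ j ∧ i ∈ S ∧ j ∈ S then
          fC f S ^ 2 / ((S.card : ℝ) * ((S.card : ℝ) - 1)) else 0))
      ≤ 9 * (if i ≠ j then
          (if D i (D j f) = 0 then 0 else
            (normC 2 (D i (D j f))) ^ 2 /
              (1 + Real.log (normC 2 (D i (D j f)) / normC 1 (D i (D j f)))) ^ 2)
          else 0) := by
    intro i j
    by_cases hij : i = j
    · rw [if_neg (by simpa using hij)]
      rw [Finset.sum_eq_zero]
      · norm_num
      · intro S _
        rw [if_neg]
        rintro ⟨hne, _⟩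
        exact hne hij
    · rw [if_pos hij]
      by_cases hz : D i (D j f) = 0
      · rw [if_pos hz]
        rw [Finset.sum_eq_zero]
        · norm_num
        · intro S _
          by_cases hmem : i ∈ S ∧ j ∈ S
          · rw [if_pos ⟨hij, hmem⟩]
            have h1 : fC (D i (D j f)) S = 4 * fC f S := by
              rw [fC_DD, if_pos hmem]
            rw [hz, fC_zero] at h1
            have : fC f S = 0 := by linarith
            rw [this]
            norm_num
          · rw [if_neg]
            rintro ⟨_, hm⟩
            exact hmem hm
      · rw [if_neg hz]
        have hbound := pair_bound (D i (D j f)) hz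
        have hstep : (∑ S ∈ F2, (if i ≠ j ∧ i ∈ S ∧ j ∈ S then
            fC f S ^ 2 / ((S.card : ℝ) * ((S.card : ℝ) - 1)) else 0))
            ≤ (1/16) * ∑ S ∈ F2,
              fC (D i (D j f)) S ^ 2 / ((S.card : ℝ) * ((S.card : ℝ) - 1)) := by
          rw [Finset.mul_sum]
          apply Finset.sum_le_sum
          intro S hS
          rw [hF2, Finset.mem_filter] at hS
          obtain ⟨_, h3c⟩ := hS
          have hc3 : (3:ℝ) ≤ (S.card : ℝ) := by exact_mod_cast h3c
          have hXpos : (0:ℝ) < (S.card : ℝ) * ((S.card : ℝ) - 1) := by nlinarith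
          by_cases hmem : i ∈ S ∧ j ∈ S
          · rw [if_pos ⟨hij, hmem⟩]
            have h1 : fC (D i (D j f)) S = 4 * fC f S := by
              rw [fC_DD, if_pos hmem]
            rw [h1]
            rw [show (4 * fC f S)^2 = 16 * fC f S ^2 from by ring]
            rw [mul_div_assoc]
            ring_nf
            rfl
          · rw [if_neg (by rintro ⟨_, hm⟩; exact hmem hm)]
            positivity
        have hfin : (1/16) * (∑ S ∈ F2,
            fC (D i (D j f)) S ^ 2 / ((S.card : ℝ) * ((S.card : ℝ) - 1)))
            ≤ 9 * ((normC 2 (D i (D j f))) ^ 2 /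
              (1 + Real.log (normC 2 (D i (D j f)) / normC 1 (D i (D j f)))) ^ 2) := by
          have hnn : (0:ℝ) ≤ (normC 2 (D i (D j f))) ^ 2 /
              (1 + Real.log (normC 2 (D i (D j f)) / normC 1 (D i (D j f)))) ^ 2 :=
            div_nonneg (sq_nonneg _) (sq_nonneg _)
          rw [hF2] at *
          nlinarith [hbound, hnn]
        linarith [hstep, hfin]
  have hpart2 : (∑ S ∈ F2, fC f S ^ 2)
      ≤ 9 * ∑ i : Fin n, ∑ j : Fin n,
          (if i ≠ j then
            (if D i (D j f) = 0 then 0 else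
              (normC 2 (D i (D j f))) ^ 2 /
                (1 + Real.log (normC 2 (D i (D j f)) / normC 1 (D i (D j f)))) ^ 2)
            else 0) := by
    have hid : (∑ S ∈ F2, fC f S ^ 2)
        = ∑ S ∈ F2, ∑ i : Fin n, ∑ j : Fin n, (if i ≠ j ∧ i ∈ S ∧ j ∈ S then
            fC f S ^ 2 / ((S.card : ℝ) * ((S.card : ℝ) - 1)) else 0) := by
      apply Finset.sum_congr rfl
      intro S hS
      rw [hF2, Finset.mem_filter] at hS
      obtain ⟨_, h3c⟩ := hS
      rw [pair_count S (by omega)]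
      have hc3 : (3:ℝ) ≤ (S.card : ℝ) := by exact_mod_cast h3c
      have hXpos : (0:ℝ) < (S.card : ℝ) * ((S.card : ℝ) - 1) := by nlinarith
      have hc1 : (S.card : ℝ) - 1 ≠ 0 := by linarith
      field_simp
    have hswap : (∑ S ∈ F2, ∑ i : Fin n, ∑ j : Fin n, (if i ≠ j ∧ i ∈ S ∧ j ∈ S then
            fC f S ^ 2 / ((S.card : ℝ) * ((S.card : ℝ) - 1)) else 0))
        = ∑ i : Fin n, ∑ j : Fin n, ∑ S ∈ F2, (if i ≠ j ∧ i ∈ S ∧ j ∈ S then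
            fC f S ^ 2 / ((S.card : ℝ) * ((S.card : ℝ) - 1)) else 0) := by
      rw [Finset.sum_comm]
      apply Finset.sum_congr rfl
      intro i _
      rw [Finset.sum_comm]
    rw [hid, hswap]
    calc (∑ i : Fin n, ∑ j : Fin n, ∑ S ∈ F2, (if i ≠ j ∧ i ∈ S ∧ j ∈ S then
            fC f S ^ 2 / ((S.card : ℝ) * ((S.card : ℝ) - 1)) else 0))
        ≤ ∑ i : Fin n, ∑ j : Fin n, 9 * (if i ≠ j then
            (if D i (D j f) = 0 then 0 else
              (normC 2 (D i (D j f))) ^ 2 /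
                (1 + Real.log (normC 2 (D i (D j f)) / normC 1 (D i (D j f)))) ^ 2)
            else 0) :=
          Finset.sum_le_sum fun i _ => Finset.sum_le_sum fun j _ => hpair i j
      _ = 9 * ∑ i : Fin n, ∑ j : Fin n, (if i ≠ j then
            (if D i (D j f) = 0 then 0 else
              (normC 2 (D i (D j f))) ^ 2 /
                (1 + Real.log (normC 2 (D i (D j f)) / normC 1 (D i (D j f)))) ^ 2)
            else 0) := by
          rw [Finset.mul_sum]
          apply Finset.sum_congr rfl
          intro i _
          rw [Finset.mul_sum]
  -- conclude
  have hT1nn : (0:ℝ) ≤ ∑ i : Fin n, normC p (D i f) ^ 2 :=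
    Finset.sum_nonneg fun i _ => sq_nonneg _
  have hT2nn : (0:ℝ) ≤ ∑ i : Fin n, ∑ j : Fin n,
      (if i ≠ j then
        (if D i (D j f) = 0 then 0 else
          (normC 2 (D i (D j f))) ^ 2 /
            (1 + Real.log (normC 2 (D i (D j f)) / normC 1 (D i (D j f)))) ^ 2)
        else 0) := by
    apply Finset.sum_nonneg
    intro i _
    apply Finset.sum_nonneg
    intro j _
    by_cases hij : i ≠ j
    · rw [if_pos hij]
      by_cases hz : D i (D j f) = 0
      · rw [if_pos hz]
      · rw [if_neg hz]
        exact div_nonneg (sq_nonneg _) (sq_nonneg _)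
    · rw [if_neg hij]
  rw [hvar]
  linarith [hpart1, hpart2, hT1nn, hT2nn]
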